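/- For every n ≥ 2, all primes p and q, and every natural number ℓ, there exists a finite group P with |P| ≥ ℓ and a subset X ⊆ P with |X| = n+1 such that X generates P and, for every proper subset Y ⊊ X, the subgroup ⟨Y⟩ generated by Y is an extension of an abelian group of exponent dividing p by an abelian group of exponent dividing q; that is, ⟨Y⟩ has a normal subgroup N that is abelian with a^p = 1 for all a ∈ N, and the quotient ⟨Y⟩/N is abelian with b^q = 1 for all b ∈ ⟨Y⟩/N. -/
import Mathlib

namespace Stmt10

abbrev Agp (m q : ℕ) := Fin m → ZMod q
abbrev Bgp (m p q : ℕ) := (Fin m → ZMod q) → Multiplicative (ZMod p)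
abbrev Om (m p q : ℕ) := (Fin m → ZMod q) × ZMod p
abbrev Vgp (m p q M : ℕ) := Om m p q → Multiplicative (ZMod M)

def phi (m p q : ℕ) : Multiplicative (Agp m q) →* MulAut (Bgp m p q) where
  toFun a :=
    { toFun := fun b x => b (x - a.toAdd)
      invFun := fun b x => b (x + a.toAdd)
      left_inv := fun b => funext fun x => by simp
      right_inv := fun b => funext fun x => by simp
      map_mul' := fun b c => rfl }
  map_one' := by ext b x; simp
  map_mul' a a' := by ext b x; simp [sub_sub]

abbrev Hgp (m p q : ℕ) := (Bgp m p q) ⋊[phi m p q] (Multiplicative (Agp m q))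

def psiAut (m p q M : ℕ) (h : Hgp m p q) : MulAut (Vgp m p q M) where
  toFun f ω := f (ω.1 - h.right.toAdd, ω.2 - (h.left ω.1).toAdd)
  invFun f ω := f (ω.1 + h.right.toAdd, ω.2 + (h.left (ω.1 + h.right.toAdd)).toAdd)
  left_inv f := by funext ω; simp
  right_inv f := by funext ω; simp
  map_mul' f g := rfl

def psi (m p q M : ℕ) : Hgp m p q →* MulAut (Vgp m p q M) where
  toFun := psiAut m p q M
  map_one' := by ext f ω; simp [psiAut]
  map_mul' h₁ h₂ := by ext f ω; simp [psiAut, phi, sub_sub]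

abbrev Ggp (m p q M : ℕ) := (Vgp m p q M) ⋊[psi m p q M] (Hgp m p q)

section elements

variable (m p q M : ℕ)

/-- the all-ones vector in `A`. -/
def aa : Agp m q := fun _ => 1

/-- basis vectors. -/
def ee (r : Fin m) : Agp m q := Pi.single r 1

def beta0 : Bgp m p q := fun x => Multiplicative.ofAdd (if x = 0 then (1 : ZMod p) else 0)
def beta1 : Bgp m p q := fun x => Multiplicative.ofAdd (if x = aa m q then (1 : ZMod p) else 0)

def hA (a : Agp m q) : Hgp m p q := SemidirectProduct.inr (Multiplicative.ofAdd a)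
def hB (b : Bgp m p q) : Hgp m p q := SemidirectProduct.inl b

/-- the basic potential function `w`. -/
def wV : Vgp m p q M := fun ω =>
  Multiplicative.ofAdd (if ω.1 = aa m q ∧ ω.2 = 0 then (1 : ZMod M) else 0)

/-- the "constant one of the group ring" function. -/
def cV : Vgp m p q M := fun ω => Multiplicative.ofAdd (if ω.2 = 0 then (1 : ZMod M) else 0)

/-- the correction function for the subset missing `x_j`. -/
def gV (j : Fin m) : Vgp m p q M := fun ω =>
  Multiplicative.ofAdd (if ω.1 j ≠ 0 ∧ ω.2 = 0 then (-1 : ZMod M) else 0)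

/-- conjugated copy of `H` inside `G`, as a hom. -/
def cw (u : Vgp m p q M) : Hgp m p q →* Ggp m p q M :=
  ((MulAut.conj (SemidirectProduct.inl u)).toMonoidHom).comp SemidirectProduct.inr

lemma cw_apply (u : Vgp m p q M) (h : Hgp m p q) :
    cw m p q M u h = SemidirectProduct.inl (u * (psi m p q M h u)⁻¹) *
      SemidirectProduct.inr h := by
  ext <;> simp [cw, mul_assoc]

lemma cw_eq_inr (u : Vgp m p q M) (h : Hgp m p q) (hfix : psi m p q M h u = u) :
    cw m p q M u h = SemidirectProduct.inr h := by
  rw [cw_apply, hfix]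
  simp

lemma cw_eq_cw (u u' : Vgp m p q M) (h : Hgp m p q)
    (hc : u * (psi m p q M h u)⁻¹ = u' * (psi m p q M h u')⁻¹) :
    cw m p q M u h = cw m p q M u' h := by
  rw [cw_apply, cw_apply, hc]

/-- the generators -/
def xg (r : Fin m) : Ggp m p q M := cw m p q M (wV m p q M) (hA m p q (ee m q r))
def y1 : Ggp m p q M := SemidirectProduct.inr (hB m p q (beta0 m p q))
def y2 : Ggp m p q M := SemidirectProduct.inr (hB m p q (beta1 m p q))

end elements

end Stmt10

namespace Stmt10

section identities

variable (m p q M : ℕ)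

lemma aa_ne_zero [Fact (1 < q)] (hm : 0 < m) : aa m q ≠ 0 := by
  intro h
  have := congrFun h ⟨0, hm⟩
  simp [aa] at this

lemma psi_apply (h : Hgp m p q) (f : Vgp m p q M) (ω : Om m p q) :
    psi m p q M h f ω = f (ω.1 - h.right.toAdd, ω.2 - (h.left ω.1).toAdd) := rfl

@[simp] lemma hB_left (b : Bgp m p q) : (hB m p q b).left = b := rfl
@[simp] lemma hB_right (b : Bgp m p q) : (hB m p q b).right = 1 := rfl
@[simp] lemma hA_left (a : Agp m q) : (hA m p q a).left = 1 := rfl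
@[simp] lemma hA_right (a : Agp m q) : (hA m p q a).right = Multiplicative.ofAdd a := rfl

/-- F1 : `β₀` fixes `w`. -/
lemma F1 [Fact (1 < q)] (hm : 0 < m) :
    psi m p q M (hB m p q (beta0 m p q)) (wV m p q M) = wV m p q M := by
  funext ω
  rw [psi_apply]
  simp only [hB_left, hB_right, toAdd_one, sub_zero, wV, beta0, toAdd_ofAdd]
  by_cases hx : ω.1 = 0
  · have : ω.1 ≠ aa m q := by
      rw [hx]; exact fun h => aa_ne_zero m q hm h.symm
    rw [hx] at this
    simp [hx, this]
  · simp [hx]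

end identities

end Stmt10

namespace Stmt10

section identities2

variable (m p q M : ℕ)

/-- F2 : `β₁` fixes `w - c`. -/
lemma F2 : psi m p q M (hB m p q (beta1 m p q)) (wV m p q M * (cV m p q M)⁻¹) =
    wV m p q M * (cV m p q M)⁻¹ := by
  funext ω
  rw [psi_apply]
  apply Multiplicative.toAdd.injective
  simp only [hB_left, hB_right, toAdd_one, sub_zero, Pi.mul_apply, Pi.inv_apply,
    toAdd_mul, toAdd_inv, wV, cV, beta1, toAdd_ofAdd]
  by_cases hx : ω.1 = aa m q
  · simp [hx]
  · simp [hx]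

/-- F3 : translations fix `c`. -/
lemma F3 (a : Agp m q) : psi m p q M (hA m p q a) (cV m p q M) = cV m p q M := by
  funext ω
  rw [psi_apply]
  simp [cV]

/-- F4 : the translation `e_r`, `r ≠ j`, fixes `g_j`. -/
lemma F4 (r j : Fin m) (hrj : r ≠ j) :
    psi m p q M (hA m p q (ee m q r)) (gV m p q M j) = gV m p q M j := by
  funext ω
  rw [psi_apply]
  simp only [hA_left, hA_right, toAdd_ofAdd, Pi.one_apply, toAdd_one, sub_zero, gV]
  have : (ω.1 - ee m q r) j = ω.1 j := by
    simp [ee, Pi.single_eq_of_ne (Ne.symm hrj)]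
  rw [this]

/-- F5a : `β₀` fixes `g_j`. -/
lemma F5a (j : Fin m) :
    psi m p q M (hB m p q (beta0 m p q)) (gV m p q M j) = gV m p q M j := by
  funext ω
  rw [psi_apply]
  simp only [hB_left, hB_right, toAdd_one, sub_zero, gV, beta0, toAdd_ofAdd]
  by_cases hx : ω.1 = 0
  · simp [hx]
  · simp [hx]

/-- F6 : `β₁` fixes `w * g_j`. -/
lemma F6 [Fact (1 < q)] (j : Fin m) :
    psi m p q M (hB m p q (beta1 m p q)) (wV m p q M * gV m p q M j) =
      wV m p q M * gV m p q M j := by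
  funext ω
  rw [psi_apply]
  apply Multiplicative.toAdd.injective
  simp only [hB_left, hB_right, toAdd_one, sub_zero, Pi.mul_apply, toAdd_mul,
    wV, gV, beta1, toAdd_ofAdd]
  by_cases hx : ω.1 = aa m q
  · have h1 : aa m q j ≠ 0 := by simp [aa]
    simp only [hx, h1, ne_eq, not_false_iff, true_and]
    split_ifs <;> ring
  · simp [hx]

/-- F7 : conjugating `β₀` by the translation `aa` gives `β₁`. -/
lemma F7 : phi m p q (Multiplicative.ofAdd (aa m q)) (beta0 m p q) = beta1 m p q := by
  funext x
  simp only [phi, MonoidHom.coe_mk, OneHom.coe_mk, MulEquiv.coe_mk, Equiv.coe_fn_mk,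
    toAdd_ofAdd, beta0, beta1, sub_eq_zero]

end identities2

end Stmt10

namespace Stmt10

section membership

variable (m p q M : ℕ)

lemma cw_mul_fix (u d : Vgp m p q M) (h : Hgp m p q) (hd : psi m p q M h d = d) :
    cw m p q M (u * d) h = cw m p q M u h := by
  apply cw_eq_cw
  rw [map_mul, hd, mul_inv]
  rw [mul_mul_mul_comm]
  simp

def uY1 : Vgp m p q M := wV m p q M * (cV m p q M)⁻¹
def uXj (j : Fin m) : Vgp m p q M := wV m p q M * gV m p q M j

/-- membership facts, case missing `y2` -/
lemma memA_x (r : Fin m) : xg m p q M r ∈ (cw m p q M (wV m p q M)).range :=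
  ⟨hA m p q (ee m q r), rfl⟩

lemma memA_y1 [Fact (1 < q)] (hm : 0 < m) :
    y1 m p q M ∈ (cw m p q M (wV m p q M)).range :=
  ⟨hB m p q (beta0 m p q), cw_eq_inr _ _ _ _ _ _ (F1 m p q M hm)⟩

/-- membership facts, case missing `y1` -/
lemma memB_x (r : Fin m) : xg m p q M r ∈ (cw m p q M (uY1 m p q M)).range := by
  refine ⟨hA m p q (ee m q r), ?_⟩
  rw [uY1, cw_mul_fix m p q M _ _ _ (by rw [map_inv, F3])]
  rfl

lemma memB_y2 : y2 m p q M ∈ (cw m p q M (uY1 m p q M)).range :=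
  ⟨hB m p q (beta1 m p q), cw_eq_inr _ _ _ _ _ _ (F2 m p q M)⟩

/-- membership facts, case missing `x_j` -/
lemma memC_x (j r : Fin m) (hrj : r ≠ j) :
    xg m p q M r ∈ (cw m p q M (uXj m p q M j)).range := by
  refine ⟨hA m p q (ee m q r), ?_⟩
  rw [uXj, cw_mul_fix m p q M _ _ _ (F4 m p q M r j hrj)]
  rfl

lemma memC_y1 [Fact (1 < q)] (hm : 0 < m) (j : Fin m) :
    y1 m p q M ∈ (cw m p q M (uXj m p q M j)).range := by
  refine ⟨hB m p q (beta0 m p q), cw_eq_inr _ _ _ _ _ _ ?_⟩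
  rw [uXj, map_mul, F1 m p q M hm, F5a]

lemma memC_y2 [Fact (1 < q)] (j : Fin m) :
    y2 m p q M ∈ (cw m p q M (uXj m p q M j)).range :=
  ⟨hB m p q (beta1 m p q), cw_eq_inr _ _ _ _ _ _ (F6 m p q M j)⟩

end membership

section tau

variable (m p q M : ℕ)

def tauV : Vgp m p q M := wV m p q M * (psi m p q M (hB m p q (beta1 m p q)) (wV m p q M))⁻¹

def tau : Ggp m p q M := SemidirectProduct.inl (tauV m p q M)

/-- the product of all the `x` generators, in order. -/
def Wlist : Ggp m p q M := ((List.finRange m).map (xg m p q M)).prod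

lemma sum_ee : (∑ r : Fin m, ee m q r) = aa m q := by
  have := Finset.univ_sum_single (aa m q)
  simpa [ee, aa] using this

lemma prod_xg : Wlist m p q M = cw m p q M (wV m p q M) (hA m p q (aa m q)) := by
  have h0 : Wlist m p q M =
      ((List.finRange m).map
        (fun r => ((cw m p q M (wV m p q M)).comp SemidirectProduct.inr)
          (Multiplicative.ofAdd (ee m q r)))).prod := rfl
  have h0b : (List.map (fun r => ((cw m p q M (wV m p q M)).comp SemidirectProduct.inr)
      (Multiplicative.ofAdd (ee m q r))) (List.finRange m)) =
      (List.map (((cw m p q M (wV m p q M)).comp SemidirectProduct.inr) ∘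
        (fun r => Multiplicative.ofAdd (ee m q r))) (List.finRange m)) := rfl
  rw [h0, h0b, ← List.map_map, ← map_list_prod]
  have h1 : (((List.finRange m).map fun r => Multiplicative.ofAdd (ee m q r))).prod =
      Multiplicative.ofAdd (aa m q) := by
    have h2 : (((List.finRange m).map fun r => Multiplicative.ofAdd (ee m q r))).prod =
        ∏ r : Fin m, Multiplicative.ofAdd (ee m q r) := by
      rw [Fin.prod_univ_def]
    rw [h2, ← ofAdd_sum, sum_ee]
  rw [h1]
  rfl

lemma tau_eq [Fact (1 < q)] (hm : 0 < m) :
    Wlist m p q M * y1 m p q M * (Wlist m p q M)⁻¹ * (y2 m p q M)⁻¹ = tau m p q M := by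
  rw [prod_xg m p q M]
  have hy1 : y1 m p q M = cw m p q M (wV m p q M) (hB m p q (beta0 m p q)) :=
    (cw_eq_inr _ _ _ _ _ _ (F1 m p q M hm)).symm
  rw [hy1, ← map_inv, ← map_mul, ← map_mul]
  have hH : hA m p q (aa m q) * hB m p q (beta0 m p q) * (hA m p q (aa m q))⁻¹ =
      hB m p q (beta1 m p q) := by
    rw [hA, hB, hB, ← map_inv, ← F7]
    exact (SemidirectProduct.inl_aut _ _).symm
  rw [hH, cw_apply, y2, mul_inv_cancel_right, tau, tauV]

lemma tauV_val [Fact (1 < p)] : tauV m p q M (aa m q, 0) = Multiplicative.ofAdd (1 : ZMod M) := by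
  have hb : (beta1 m p q) (aa m q) = Multiplicative.ofAdd (1 : ZMod p) := by simp [beta1]
  apply Multiplicative.toAdd.injective
  rw [tauV]
  simp only [Pi.mul_apply, Pi.inv_apply, toAdd_mul, toAdd_inv]
  rw [psi_apply]
  simp only [hB_left, hB_right, toAdd_one, sub_zero, hb, toAdd_ofAdd, wV]
  have h1 : ((0 : ZMod p) - 1) ≠ 0 := by simp
  simp [h1]

end tau

end Stmt10

namespace Stmt10

section proj

variable (m p q M : ℕ)

def piA : Ggp m p q M →* Multiplicative (Agp m q) :=
  SemidirectProduct.rightHom.comp SemidirectProduct.rightHom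

lemma piA_cw (u : Vgp m p q M) (h : Hgp m p q) :
    piA m p q M (cw m p q M u h) = h.right := by
  simp [piA, cw_apply]

lemma piA_xg (r : Fin m) : piA m p q M (xg m p q M r) = Multiplicative.ofAdd (ee m q r) := by
  rw [xg, piA_cw]; rfl

lemma piA_y1 : piA m p q M (y1 m p q M) = 1 := by simp [piA, y1]
lemma piA_y2 : piA m p q M (y2 m p q M) = 1 := by simp [piA, y2]

lemma ee_ne_zero [Fact (1 < q)] (r : Fin m) : ee m q r ≠ 0 := by
  intro h
  have := congrFun h r
  simp [ee] at this

lemma xg_injective [Fact (1 < q)] : Function.Injective (xg m p q M) := by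
  intro r r' h
  have h2 := congrArg (piA m p q M) h
  rw [piA_xg, piA_xg] at h2
  have h3 : ee m q r = ee m q r' := by
    have := congrArg Multiplicative.toAdd h2
    simpa using this
  by_contra hrr
  have := congrFun h3 r
  rw [ee, ee, Pi.single_eq_same, Pi.single_eq_of_ne hrr] at this
  exact one_ne_zero this

lemma xg_ne_y1 [Fact (1 < q)] (r : Fin m) : xg m p q M r ≠ y1 m p q M := by
  intro h
  have h2 := congrArg (piA m p q M) h
  rw [piA_xg, piA_y1] at h2
  exact ee_ne_zero m q r (by simpa using congrArg Multiplicative.toAdd h2)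

lemma xg_ne_y2 [Fact (1 < q)] (r : Fin m) : xg m p q M r ≠ y2 m p q M := by
  intro h
  have h2 := congrArg (piA m p q M) h
  rw [piA_xg, piA_y2] at h2
  exact ee_ne_zero m q r (by simpa using congrArg Multiplicative.toAdd h2)

lemma y1_ne_y2 [Fact (1 < p)] [Fact (1 < q)] (hm : 0 < m) :
    y1 m p q M ≠ y2 m p q M := by
  intro h
  rw [y1, y2] at h
  have h2 : beta0 m p q = beta1 m p q := by
    have := SemidirectProduct.inr_injective h
    have := SemidirectProduct.inl_injective (N := Bgp m p q) (φ := phi m p q) this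
    exact this
  have h3 := congrFun h2 0
  have h0 : (0 : Agp m q) ≠ aa m q := fun hh => aa_ne_zero m q hm hh.symm
  simp only [beta0, beta1, if_pos rfl, if_neg h0] at h3
  have := congrArg Multiplicative.toAdd h3
  simp at this

lemma bpow (b : Bgp m p q) : b ^ p = 1 := by
  funext z
  apply Multiplicative.toAdd.injective
  simp only [Pi.pow_apply, toAdd_pow, Pi.one_apply, toAdd_one]
  rw [nsmul_eq_mul]
  simp [ZMod.natCast_self]

lemma aq (t : Multiplicative (Agp m q)) : t ^ q = 1 := by
  apply Multiplicative.toAdd.injective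
  rw [toAdd_pow]
  funext z
  simp only [Pi.smul_apply, Pi.zero_apply, toAdd_one]
  rw [nsmul_eq_mul]
  simp [ZMod.natCast_self]

end proj

section classy

/-- abstract class-membership criterion. -/
lemma classy {G' T : Type*} [Group G'] [Group T] (p q : ℕ) (f : G' →* T)
    (W : Subgroup G')
    (hcomm : ∀ x y : G', x ∈ W → y ∈ W → f x = 1 → f y = 1 → x * y = y * x)
    (hpow : ∀ x : G', x ∈ W → f x = 1 → x ^ p = 1)
    (hT : ∀ s t : T, s * t = t * s) (hq : ∀ t : T, t ^ q = 1) :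
    ∃ (N : Subgroup ↥W) (_ : N.Normal),
      (∀ a b : N, a * b = b * a) ∧ (∀ a : N, a ^ p = 1) ∧
      (∀ x y : ↥W ⧸ N, x * y = y * x) ∧ (∀ x : ↥W ⧸ N, x ^ q = 1) := by
  refine ⟨(f.comp W.subtype).ker, MonoidHom.normal_ker _, ?_, ?_, ?_, ?_⟩
  · rintro ⟨⟨a, ha⟩, hka⟩ ⟨⟨b, hb⟩, hkb⟩
    ext
    exact hcomm a b ha hb hka hkb
  · rintro ⟨⟨a, ha⟩, hka⟩
    ext
    exact hpow a ha hka
  · intro x y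
    refine QuotientGroup.induction_on x fun a => QuotientGroup.induction_on y fun b => ?_
    rw [← QuotientGroup.mk_mul, ← QuotientGroup.mk_mul]
    rw [QuotientGroup.eq]
    have : (f.comp W.subtype) ((a * b)⁻¹ * (b * a)) = 1 := by
      rw [map_mul, map_inv, map_mul, map_mul]
      rw [mul_inv_rev, hT ((f.comp W.subtype) b) ((f.comp W.subtype) a)]
      simp [mul_assoc]
    exact this
  · intro x
    refine QuotientGroup.induction_on x fun a => ?_
    rw [← QuotientGroup.mk_pow]
    rw [QuotientGroup.eq_one_iff]
    show (f.comp W.subtype) (a ^ q) = 1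
    rw [map_pow]
    exact hq _

end classy

end Stmt10

namespace Stmt10

section assemble

/-- equivalence of a semidirect product with the product type. -/
def sdEquiv {N G : Type*} [Group N] [Group G] (φ : G →* MulAut N) :
    (N ⋊[φ] G) ≃ N × G where
  toFun x := (x.left, x.right)
  invFun x := ⟨x.1, x.2⟩
  left_inv x := rfl
  right_inv x := rfl

noncomputable instance {N G : Type*} [Group N] [Group G] (φ : G →* MulAut N)
    [Fintype N] [Fintype G] : Fintype (N ⋊[φ] G) :=
  Fintype.ofEquiv _ (sdEquiv φ).symm

variable (m p q M : ℕ) [Fact (1 < p)] [Fact (1 < q)] [NeZero M]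

noncomputable instance : Fintype (Ggp m p q M) := by
  unfold Ggp
  infer_instance

noncomputable instance : DecidableEq (Ggp m p q M) := Classical.decEq _

noncomputable def SG : Finset (Ggp m p q M) :=
  (Finset.univ.image (xg m p q M)) ∪ {y1 m p q M, y2 m p q M}

lemma xg_mem_SG (r : Fin m) : xg m p q M r ∈ SG m p q M := by
  simp [SG]

lemma y1_mem_SG : y1 m p q M ∈ SG m p q M := by simp [SG]
lemma y2_mem_SG : y2 m p q M ∈ SG m p q M := by simp [SG]

lemma mem_SG_iff (g : Ggp m p q M) :
    g ∈ SG m p q M ↔ (∃ r, g = xg m p q M r) ∨ g = y1 m p q M ∨ g = y2 m p q M := by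
  constructor
  · intro h
    simp only [SG, Finset.mem_union, Finset.mem_image, Finset.mem_univ, true_and,
      Finset.mem_insert, Finset.mem_singleton] at h
    rcases h with ⟨r, hr⟩ | h | h
    · exact Or.inl ⟨r, hr.symm⟩
    · exact Or.inr (Or.inl h)
    · exact Or.inr (Or.inr h)
  · intro h
    rcases h with ⟨r, hr⟩ | h | h
    · rw [hr]; exact xg_mem_SG m p q M r
    · rw [h]; exact y1_mem_SG m p q M
    · rw [h]; exact y2_mem_SG m p q M

lemma card_SG (hm : 0 < m) : (SG m p q M).card = m + 2 := by
  rw [SG, Finset.card_union_of_disjoint, Finset.card_image_of_injective _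
    (xg_injective m p q M), Finset.card_univ, Fintype.card_fin]
  · rw [Finset.card_insert_of_notMem (by simp [y1_ne_y2 m p q M hm]),
      Finset.card_singleton]
  · rw [Finset.disjoint_left]
    intro a ha hmem
    simp only [Finset.mem_image, Finset.mem_univ, true_and] at ha
    obtain ⟨r, rfl⟩ := ha
    simp only [Finset.mem_insert, Finset.mem_singleton] at hmem
    rcases hmem with h | h
    · exact xg_ne_y1 m p q M r h
    · exact xg_ne_y2 m p q M r h

lemma tau_mem (hm : 0 < m) : tau m p q M ∈ Subgroup.closure (SG m p q M : Set (Ggp m p q M)) := by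
  rw [← tau_eq m p q M hm]
  have hW : Wlist m p q M ∈ Subgroup.closure (SG m p q M : Set (Ggp m p q M)) := by
    apply Subgroup.list_prod_mem
    intro x hx
    rw [List.mem_map] at hx
    obtain ⟨r, _, rfl⟩ := hx
    exact Subgroup.subset_closure (xg_mem_SG m p q M r)
  exact mul_mem (mul_mem (mul_mem hW
    (Subgroup.subset_closure (y1_mem_SG m p q M)))
    (inv_mem hW)) (inv_mem (Subgroup.subset_closure (y2_mem_SG m p q M)))

lemma M_dvd_orderOf_tau : M ∣ orderOf (tau m p q M) := by
  have h1 : tau m p q M ^ orderOf (tau m p q M) = 1 := pow_orderOf_eq_one _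
  rw [tau, ← map_pow] at h1
  have h2 : tauV m p q M ^ orderOf (tau m p q M) = 1 := by
    have := SemidirectProduct.inl_injective (N := Vgp m p q M) (φ := psi m p q M)
      (h1.trans (map_one SemidirectProduct.inl).symm)
    exact this
  have h3 := congrFun h2 (aa m q, 0)
  rw [Pi.pow_apply, tauV_val m p q M] at h3
  have h4 := congrArg Multiplicative.toAdd h3
  rw [toAdd_pow, toAdd_ofAdd, nsmul_eq_mul, mul_one] at h4
  rw [← ZMod.natCast_eq_zero_iff]
  exact h4

end assemble

end Stmt10

open Stmt10

/-- For every `n ≥ 2`, all primes `p, q`, and every `ℓ`, there is a finite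
group `P` with `|P| ≥ ℓ` and a generating set `X ⊆ P` with `|X| = n + 1` such
that for every proper subset `Y ⊊ X`, the subgroup `⟨Y⟩` has an abelian normal
subgroup `N` of exponent dividing `p` with `⟨Y⟩ / N` abelian of exponent
dividing `q`. -/
theorem stmt_10 (n : ℕ) (hn : 2 ≤ n) (p q : ℕ) (hp : p.Prime) (hq : q.Prime)
    (ℓ : ℕ) :
    ∃ (P : Type) (_ : Group P) (_ : Fintype P),
      ℓ ≤ Fintype.card P ∧
      ∃ X : Finset P, X.card = n + 1 ∧
        Subgroup.closure (X : Set P) = ⊤ ∧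
        ∀ Y : Finset P, Y ⊂ X →
          ∃ (N : Subgroup (Subgroup.closure (Y : Set P))) (_ : N.Normal),
            (∀ a b : N, a * b = b * a) ∧
            (∀ a : N, a ^ p = 1) ∧
            (∀ x y : Subgroup.closure (Y : Set P) ⧸ N, x * y = y * x) ∧
            (∀ x : Subgroup.closure (Y : Set P) ⧸ N, x ^ q = 1) := by
  classical
  haveI : Fact (1 < p) := ⟨hp.one_lt⟩
  haveI : Fact (1 < q) := ⟨hq.one_lt⟩
  set m := n - 1 with hmdef
  have hm : 0 < m := by omega
  set M := ℓ + 1 with hMdef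
  haveI : NeZero M := ⟨by omega⟩
  set G := Ggp m p q M with hGdef
  set K := Subgroup.closure ((SG m p q M : Finset G) : Set G) with hKdef
  haveI : Fintype ↥K := Fintype.ofFinite _
  refine ⟨↥K, inferInstance, inferInstance, ?_, ?_⟩
  · -- cardinality
    have τmem : tau m p q M ∈ K := tau_mem m p q M hm
    set τP : ↥K := ⟨tau m p q M, τmem⟩ with hτP
    have h1 : orderOf ((K.subtype) τP) = orderOf τP :=
      orderOf_injective K.subtype K.subtype_injective τP
    have h2 : M ∣ orderOf τP := by
      rw [← h1]
      exact M_dvd_orderOf_tau m p q M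
    have h3 : orderOf τP ∣ Fintype.card ↥K := orderOf_dvd_card
    have h4 : M ≤ Fintype.card ↥K :=
      Nat.le_of_dvd Fintype.card_pos (h2.trans h3)
    omega
  · -- the generating set
    set emb : {x // x ∈ SG m p q M} ↪ ↥K :=
      ⟨fun g => (⟨g.1, Subgroup.subset_closure g.2⟩ : ↥K), by
        intro a b hab
        have h2 := congrArg (fun z : ↥K => (z : G)) hab
        exact Subtype.ext h2⟩ with hemb
    set X : Finset ↥K := (SG m p q M).attach.map emb with hX
    have hXval : ∀ s : ↥K, s ∈ X → (s : G) ∈ SG m p q M := by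
      intro s hs
      rw [hX, Finset.mem_map] at hs
      obtain ⟨a, _, rfl⟩ := hs
      exact a.2
    refine ⟨X, ?_, ?_, ?_⟩
    · rw [hX, Finset.card_map, Finset.card_attach, card_SG m p q M hm]
      omega
    · have hset : (↑X : Set ↥K) = ((↑) : ↥K → G) ⁻¹' ((SG m p q M : Finset G) : Set G) := by
        ext s
        constructor
        · intro hs
          exact hXval s hs
        · intro hs
          rw [Finset.mem_coe, hX, Finset.mem_map]
          exact ⟨⟨(s : G), hs⟩, Finset.mem_attach _ _, Subtype.ext rfl⟩
      rw [hset]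
      exact Subgroup.closure_closure_coe_preimage
    · -- proper subsets
      intro Y hY
      obtain ⟨g₀, hg₀X, hg₀Y⟩ := Finset.exists_of_ssubset hY
      have hYX : Y ⊆ X := le_of_lt hY
      have hval : ((g₀ : ↥K) : G) ∈ SG m p q M := hXval g₀ hg₀X
      -- choose the conjugating element u according to which generator is missing
      have key : ∃ u : Vgp m p q M, ∀ s : ↥K, s ∈ Y → ((s : ↥K) : G) ∈ (cw m p q M u).range := by
        rcases (mem_SG_iff m p q M _).1 hval with ⟨j, hj⟩ | h | h
        · refine ⟨uXj m p q M j, ?_⟩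
          intro s hs
          rcases (mem_SG_iff m p q M _).1 (hXval s (hYX hs)) with ⟨r, hr⟩ | h' | h'
          · have hrj : r ≠ j := by
              intro hrj
              apply hg₀Y
              have : s = g₀ := Subtype.ext (by rw [hr, hrj, ← hj])
              rwa [← this]
            rw [hr]
            exact memC_x m p q M j r hrj
          · rw [h']
            exact memC_y1 m p q M hm j
          · rw [h']
            exact memC_y2 m p q M j
        · refine ⟨uY1 m p q M, ?_⟩
          intro s hs
          rcases (mem_SG_iff m p q M _).1 (hXval s (hYX hs)) with ⟨r, hr⟩ | h' | h'
          · rw [hr]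
            exact memB_x m p q M r
          · exfalso
            apply hg₀Y
            have : s = g₀ := Subtype.ext (by rw [h', ← h])
            rwa [← this]
          · rw [h']
            exact memB_y2 m p q M
        · refine ⟨wV m p q M, ?_⟩
          intro s hs
          rcases (mem_SG_iff m p q M _).1 (hXval s (hYX hs)) with ⟨r, hr⟩ | h' | h'
          · rw [hr]
            exact memA_x m p q M r
          · rw [h']
            exact memA_y1 m p q M hm
          · exfalso
            apply hg₀Y
            have : s = g₀ := Subtype.ext (by rw [h', ← h])
            rwa [← this]
      obtain ⟨u, hu⟩ := key
      have hclo : ∀ z : ↥K, z ∈ Subgroup.closure (Y : Set ↥K) →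
          ((z : ↥K) : G) ∈ (cw m p q M u).range := by
        intro z hz
        have hle : Subgroup.closure (Y : Set ↥K) ≤
            Subgroup.comap K.subtype ((cw m p q M u).range) := by
          rw [Subgroup.closure_le]
          intro s hs
          exact hu s hs
        exact hle hz
      refine classy p q ((piA m p q M).comp K.subtype) (Subgroup.closure (Y : Set ↥K))
        ?_ ?_ (fun s t => mul_comm s t) (aq m q)
      · -- commutativity of the kernel
        intro x y hx hy hfx hfy
        obtain ⟨h₁, hh₁⟩ := hclo x hx
        obtain ⟨h₂, hh₂⟩ := hclo y hy
        have hr₁ : h₁.right = 1 := by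
          rw [← piA_cw m p q M u h₁, hh₁]
          exact hfx
        have hr₂ : h₂.right = 1 := by
          rw [← piA_cw m p q M u h₂, hh₂]
          exact hfy
        have e₁ : h₁ = SemidirectProduct.inl h₁.left := by
          ext
          · rfl
          · rw [hr₁]; rfl
        have e₂ : h₂ = SemidirectProduct.inl h₂.left := by
          ext
          · rfl
          · rw [hr₂]; rfl
        apply Subtype.ext
        show ((x : ↥K) : G) * ((y : ↥K) : G) = ((y : ↥K) : G) * ((x : ↥K) : G)
        rw [← hh₁, ← hh₂, ← map_mul, ← map_mul, e₁, e₂, ← map_mul, ← map_mul,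
          mul_comm h₁.left h₂.left]
      · -- p-th powers in the kernel
        intro x hx hfx
        obtain ⟨h₁, hh₁⟩ := hclo x hx
        have hr₁ : h₁.right = 1 := by
          rw [← piA_cw m p q M u h₁, hh₁]
          exact hfx
        have e₁ : h₁ = SemidirectProduct.inl h₁.left := by
          ext
          · rfl
          · rw [hr₁]; rfl
        apply Subtype.ext
        show ((x : ↥K) : G) ^ p = 1
        rw [← hh₁, ← map_pow, e₁, ← map_pow, bpow, map_one, map_one]
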